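/- Let d_Ω, d_U be C² functions on an open set W ⊆ ℝ^N, let X₀ be a C¹ vector field on W, and define X = (I − ∇d_Ω ⊗ ∇d_Ω)∇d_U + d_Ω X₀. Suppose at a point y ∈ W we have d_Ω(y) = 0, |∇d_Ω(y)| = 1, and (∇²d_Ω(y))∇d_Ω(y) = 0. Then at y: (∇²d_Ω)X − (∇X)ᵀ∇d_Ω = (∇²d_Ω)∇d_U − (I − ∇d_Ω ⊗ ∇d_Ω)(∇²d_U)∇d_Ω − X₀. -/

import Mathlib

/-- The Hessian matrix of `d`, `(∂_j (∂_i d))_{i j}`. -/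
noncomputable def hessian (N : ℕ) (d : EuclideanSpace ℝ (Fin N) → ℝ)
    (x : EuclideanSpace ℝ (Fin N)) : Matrix (Fin N) (Fin N) ℝ :=
  fun i j => fderiv ℝ (fun y => gradient d y i) x (EuclideanSpace.single j 1)

/-- The Jacobian matrix `∇X = (∂_i X^j)_{i j}` of a vector field `X`. -/
noncomputable def gradMat (N : ℕ)
    (X : EuclideanSpace ℝ (Fin N) → EuclideanSpace ℝ (Fin N))
    (x : EuclideanSpace ℝ (Fin N)) : Matrix (Fin N) (Fin N) ℝ :=
  fun i j => fderiv ℝ (fun y => X y j) x (EuclideanSpace.single i 1)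

lemma euclid_sum_single {N : ℕ} (v : EuclideanSpace ℝ (Fin N)) :
    ∑ j, v j • EuclideanSpace.single j (1:ℝ) = v := by
  have := (EuclideanSpace.basisFun (Fin N) ℝ).sum_repr v
  simpa [EuclideanSpace.basisFun_apply] using this

lemma clm_apply_vec {N : ℕ} (L : EuclideanSpace ℝ (Fin N) →L[ℝ] ℝ)
    (v : EuclideanSpace ℝ (Fin N)) :
    L v = ∑ j, v j * L (EuclideanSpace.single j 1) := by
  conv_lhs => rw [← euclid_sum_single v]
  rw [map_sum]
  simp [smul_eq_mul]

lemma contDiffAt_grad {N : ℕ} {f : EuclideanSpace ℝ (Fin N) → ℝ}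
    {y : EuclideanSpace ℝ (Fin N)} (hf : ContDiffAt ℝ 2 f y) :
    ContDiffAt ℝ 1 (fun x => gradient f x) y := by
  have h1 : ContDiffAt ℝ 1 (fderiv ℝ f) y := hf.fderiv_right (by norm_num)
  have h2 : (fun x => gradient f x) =
      fun x => (InnerProductSpace.toDual ℝ (EuclideanSpace ℝ (Fin N))).symm (fderiv ℝ f x) := rfl
  rw [h2]
  exact ((InnerProductSpace.toDual ℝ (EuclideanSpace ℝ (Fin N))).symm.contDiff.contDiffAt).comp y h1

lemma fderiv_apply_gradient {N : ℕ} {f : EuclideanSpace ℝ (Fin N) → ℝ}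
    {y v : EuclideanSpace ℝ (Fin N)} :
    fderiv ℝ f y v = inner ℝ (gradient f y) v := by
  rw [gradient]; simp

/-- with `X = (I − ∇d_Ω⊗∇d_Ω)∇d_U + d_Ω X₀`, at a point `y`
where `d_Ω(y) = 0`, `|∇d_Ω(y)| = 1`, `(∇²d_Ω(y))∇d_Ω(y) = 0`, one has
`(∇²d_Ω)X − (∇X)ᵀ∇d_Ω = (∇²d_Ω)∇d_U − (I − ∇d_Ω⊗∇d_Ω)(∇²d_U)∇d_Ω − X₀`. -/
theorem stmt10 (N : ℕ) (hN : 1 ≤ N)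
    (W : Set (EuclideanSpace ℝ (Fin N))) (hW : IsOpen W)
    (dΩ dU : EuclideanSpace ℝ (Fin N) → ℝ)
    (hdΩ : ContDiffOn ℝ 2 dΩ W) (hdU : ContDiffOn ℝ 2 dU W)
    (X₀ : EuclideanSpace ℝ (Fin N) → EuclideanSpace ℝ (Fin N))
    (hX₀ : ContDiffOn ℝ 1 X₀ W)
    (X : EuclideanSpace ℝ (Fin N) → EuclideanSpace ℝ (Fin N))
    (hX : ∀ x, X x = (gradient dU x -
        (inner ℝ (gradient dΩ x) (gradient dU x) : ℝ) • gradient dΩ x) +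
        dΩ x • X₀ x)
    (y : EuclideanSpace ℝ (Fin N)) (hy : y ∈ W)
    (hy0 : dΩ y = 0) (hunit : ‖gradient dΩ y‖ = 1)
    (hhess : (hessian N dΩ y).mulVec (fun j => gradient dΩ y j) = 0) :
    (hessian N dΩ y).mulVec (fun j => X y j) -
        (gradMat N X y).transpose.mulVec (fun j => gradient dΩ y j) =
      (hessian N dΩ y).mulVec (fun j => gradient dU y j) -
        ((1 : Matrix (Fin N) (Fin N) ℝ) -
            Matrix.vecMulVec (fun i => gradient dΩ y i) (fun i => gradient dΩ y i)).mulVec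
          ((hessian N dU y).mulVec (fun j => gradient dΩ y j)) -
        (fun i => X₀ y i) := by
  classical
  have hyW : W ∈ nhds y := hW.mem_nhds hy
  -- differentiability
  have hGc : ContDiffAt ℝ 1 (fun x => gradient dΩ x) y := contDiffAt_grad (hdΩ.contDiffAt hyW)
  have hHc : ContDiffAt ℝ 1 (fun x => gradient dU x) y := contDiffAt_grad (hdU.contDiffAt hyW)
  have hGd : DifferentiableAt ℝ (fun x => gradient dΩ x) y := hGc.differentiableAt one_ne_zero
  have hHd : DifferentiableAt ℝ (fun x => gradient dU x) y := hHc.differentiableAt one_ne_zero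
  have hX₀d : DifferentiableAt ℝ X₀ y :=
    (hX₀.contDiffAt hyW).differentiableAt one_ne_zero
  have hdΩd : DifferentiableAt ℝ dΩ y :=
    ((hdΩ.contDiffAt hyW).differentiableAt (by norm_num))
  have hGdi : ∀ i, DifferentiableAt ℝ (fun x => gradient dΩ x i) y := fun i =>
    (EuclideanSpace.proj (𝕜 := ℝ) i).differentiableAt.comp y hGd
  have hHdi : ∀ i, DifferentiableAt ℝ (fun x => gradient dU x i) y := fun i =>
    (EuclideanSpace.proj (𝕜 := ℝ) i).differentiableAt.comp y hHd
  have hX₀di : ∀ i, DifferentiableAt ℝ (fun x => X₀ x i) y := fun i =>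
    (EuclideanSpace.proj (𝕜 := ℝ) i).differentiableAt.comp y hX₀d
  have hcd : DifferentiableAt ℝ
      (fun x => (inner ℝ (gradient dΩ x) (gradient dU x) : ℝ)) y := hGd.inner ℝ hHd
  -- component fderiv as composition
  have hfGi : ∀ i, fderiv ℝ (fun x => gradient dΩ x i) y =
      (EuclideanSpace.proj (𝕜 := ℝ) i).comp (fderiv ℝ (fun x => gradient dΩ x) y) := fun i =>
    ((EuclideanSpace.proj (𝕜 := ℝ) i).hasFDerivAt.comp y hGd.hasFDerivAt).fderiv
  have hfHi : ∀ i, fderiv ℝ (fun x => gradient dU x i) y =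
      (EuclideanSpace.proj (𝕜 := ℝ) i).comp (fderiv ℝ (fun x => gradient dU x) y) := fun i =>
    ((EuclideanSpace.proj (𝕜 := ℝ) i).hasFDerivAt.comp y hHd.hasFDerivAt).fderiv
  set gv : EuclideanSpace ℝ (Fin N) := gradient dΩ y with hgv
  set hv : EuclideanSpace ℝ (Fin N) := gradient dU y with hhv
  set A : Matrix (Fin N) (Fin N) ℝ := hessian N dΩ y with hA
  set B : Matrix (Fin N) (Fin N) ℝ := hessian N dU y with hB
  -- directional derivatives in direction gv
  have hdirG : ∀ i, fderiv ℝ (fun x => gradient dΩ x i) y gv = 0 := by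
    intro i
    rw [clm_apply_vec]
    have := congrFun hhess i
    simp only [Matrix.mulVec, dotProduct, Pi.zero_apply] at this
    rw [← this]
    apply Finset.sum_congr rfl
    intro j _
    rw [mul_comm]
    rfl
  have hdirH : ∀ i, fderiv ℝ (fun x => gradient dU x i) y gv
      = (B.mulVec (fun j => gv j)) i := by
    intro i
    rw [clm_apply_vec]
    simp only [Matrix.mulVec, dotProduct]
    apply Finset.sum_congr rfl
    intro j _
    rw [mul_comm]
    rfl
  -- vector-valued directional derivatives, componentwise
  have hvecG : ∀ i, (fderiv ℝ (fun x => gradient dΩ x) y gv) i = 0 := by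
    intro i
    rw [← hdirG i, hfGi i]
    rfl
  have hvecH : ∀ i, (fderiv ℝ (fun x => gradient dU x) y gv) i
      = (B.mulVec (fun j => gv j)) i := by
    intro i
    rw [← hdirH i, hfHi i]
    rfl
  -- derivative of the inner product in direction gv
  have hSdef : fderiv ℝ (fun x => (inner ℝ (gradient dΩ x) (gradient dU x) : ℝ)) y gv
      = ∑ k, gv k * (B.mulVec (fun j => gv j)) k := by
    have h1 := fderiv_inner_apply (𝕜 := ℝ) hGd hHd gv
    rw [h1]
    have h2 : (fderiv ℝ (fun x => gradient dΩ x) y gv) = 0 := by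
      ext i; rw [hvecG i]; rfl
    rw [h2]
    simp only [inner_zero_left, add_zero]
    rw [PiLp.inner_apply]
    apply Finset.sum_congr rfl
    intro k _
    rw [hvecH k]
    simp [RCLike.inner_apply, conj_trivial]
    exact mul_comm _ _
  -- derivative of dΩ in direction gv
  have hddΩ : fderiv ℝ dΩ y gv = 1 := by
    rw [fderiv_apply_gradient]
    show (inner ℝ gv gv : ℝ) = 1
    rw [real_inner_self_eq_norm_sq, hunit]
    norm_num
  -- the components of X as functions
  have hXi : ∀ i, (fun x => X x i) =
      fun x => (gradient dU x i
        - (inner ℝ (gradient dΩ x) (gradient dU x) : ℝ) * gradient dΩ x i)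
        + dΩ x * X₀ x i := by
    intro i
    funext x
    rw [hX x]
    rfl
  -- fderiv of X components in direction gv
  have hdirX : ∀ i, fderiv ℝ (fun x => X x i) y gv =
      (B.mulVec (fun j => gv j)) i
        - gv i * (∑ k, gv k * (B.mulVec (fun j => gv j)) k) + X₀ y i := by
    intro i
    have hfd : HasFDerivAt (fun x => (gradient dU x i
        - (inner ℝ (gradient dΩ x) (gradient dU x) : ℝ) * gradient dΩ x i)
        + dΩ x * X₀ x i)
        ((fderiv ℝ (fun x => gradient dU x i) y
            - ((inner ℝ (gradient dΩ y) (gradient dU y) : ℝ)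
                  • fderiv ℝ (fun x => gradient dΩ x i) y
                + gradient dΩ y i
                  • fderiv ℝ (fun x => (inner ℝ (gradient dΩ x) (gradient dU x) : ℝ)) y))
          + (dΩ y • fderiv ℝ (fun x => X₀ x i) y + X₀ y i • fderiv ℝ dΩ y)) y :=
      (((hHdi i).hasFDerivAt.sub
        ((hcd.hasFDerivAt.mul (hGdi i).hasFDerivAt))).add
        (hdΩd.hasFDerivAt.mul (hX₀di i).hasFDerivAt))
    rw [hXi i, hfd.fderiv]
    simp only [ContinuousLinearMap.add_apply, ContinuousLinearMap.sub_apply,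
      ContinuousLinearMap.smul_apply, smul_eq_mul]
    rw [hdirG i, hdirH i, hSdef, hddΩ, hy0]
    ring
  -- transpose mulVec equals directional derivative
  have hTmul : ∀ i, ((gradMat N X y).transpose.mulVec (fun j => gv j)) i =
      fderiv ℝ (fun x => X x i) y gv := by
    intro i
    simp only [Matrix.mulVec, dotProduct, Matrix.transpose_apply]
    rw [clm_apply_vec (fderiv ℝ (fun x => X x i) y) gv]
    apply Finset.sum_congr rfl
    intro j _
    rw [mul_comm]
    rfl
  -- X y componentwise
  have hXy : ∀ j, X y j = hv j - (inner ℝ gv hv : ℝ) * gv j := by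
    intro j
    rw [hX y, hy0]
    show (hv j - (inner ℝ gv hv : ℝ) * gv j) + (0:ℝ) * X₀ y j = _
    ring
  -- A.mulVec (X y) = A.mulVec hv
  have hAX : A.mulVec (fun j => X y j) = A.mulVec (fun j => hv j) := by
    have h1 : (fun j => X y j) = (fun j => hv j)
        - (inner ℝ gv hv : ℝ) • (fun j => gv j) := by
      funext j
      simp only [Pi.sub_apply, Pi.smul_apply, smul_eq_mul]
      exact hXy j
    rw [h1, Matrix.mulVec_sub, Matrix.mulVec_smul, hhess]
    simp
  -- finish
  funext i
  simp only [Pi.sub_apply]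
  rw [congrFun hAX i, hTmul i, hdirX i]
  -- RHS expansion
  rw [Matrix.sub_mulVec, Matrix.one_mulVec]
  simp only [Pi.sub_apply, Matrix.mulVec, dotProduct, Matrix.vecMulVec_apply]
  have hexp : ∀ k, (B.mulVec (fun j => gv j)) k = ∑ m, B k m * gv m := fun k => rfl
  have hpull : ∑ x, gv i * gv x * (∑ x1, B x x1 * gv x1)
      = gv i * ∑ x, gv x * (∑ x1, B x x1 * gv x1) := by
    rw [Finset.mul_sum]
    exact Finset.sum_congr rfl fun x _ => by ring
  rw [hpull]
  ring
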